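/- Let u, v ∈ R^n with d = d_tr(u,v) > 0, let peak(u,v) = argmax_i (u_i − v_i) and valley(u,v) = argmin_i (u_i − v_i), and let ε > 0 be smaller than every nonzero value |(u_i − v_i) − (u_j − v_j)| for i < j. Let ε_i denote the vector with ε in coordinate i and 0 elsewhere. Then d_tr(u + ε_i, v) equals: d if i is in neither peak(u,v) nor valley(u,v); d + ε if i ∈ peak(u,v); d − ε if i ∈ valley(u,v) and |valley(u,v)| = 1; and d if i ∈ valley(u,v) and |valley(u,v)| ≥ 2. -/

import Mathlib

noncomputable def dtr {n : ℕ} [NeZero n] (u v : Fin n → ℝ) : ℝ :=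
  Finset.univ.sup' Finset.univ_nonempty
    (fun p : Fin n × Fin n => |u p.1 - u p.2 - v p.1 + v p.2|)

private lemma sup'_eq_of {n : ℕ} [NeZero n] (f : Fin n → ℝ) (B : ℝ)
    (h1 : ∀ j, f j ≤ B) (j : Fin n) (hj : f j = B) :
    Finset.univ.sup' Finset.univ_nonempty f = B :=
  le_antisymm (Finset.sup'_le _ _ fun k _ => h1 k)
    (hj ▸ Finset.le_sup' f (Finset.mem_univ j))

private lemma inf'_eq_of {n : ℕ} [NeZero n] (f : Fin n → ℝ) (B : ℝ)
    (h1 : ∀ j, B ≤ f j) (j : Fin n) (hj : f j = B) :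
    Finset.univ.inf' Finset.univ_nonempty f = B :=
  le_antisymm (hj ▸ Finset.inf'_le f (Finset.mem_univ j))
    (Finset.le_inf' _ _ fun k _ => h1 k)

private lemma dtr_eq {n : ℕ} [NeZero n] (u v : Fin n → ℝ) :
    dtr u v = Finset.univ.sup' Finset.univ_nonempty (fun i => u i - v i)
      - Finset.univ.inf' Finset.univ_nonempty (fun i => u i - v i) := by
  unfold dtr
  apply le_antisymm
  · apply Finset.sup'_le
    intro p _
    have h1 := Finset.le_sup' (fun i => u i - v i) (Finset.mem_univ p.1)
    have h2 := Finset.inf'_le (fun i => u i - v i) (Finset.mem_univ p.2)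
    have h3 := Finset.le_sup' (fun i => u i - v i) (Finset.mem_univ p.2)
    have h4 := Finset.inf'_le (fun i => u i - v i) (Finset.mem_univ p.1)
    rw [abs_le]
    constructor <;> linarith
  · obtain ⟨a, -, ha⟩ := Finset.exists_mem_eq_sup' Finset.univ_nonempty (fun i => u i - v i)
    obtain ⟨b, -, hb⟩ := Finset.exists_mem_eq_inf' Finset.univ_nonempty (fun i => u i - v i)
    have h := Finset.le_sup'
      (fun p : Fin n × Fin n => |u p.1 - u p.2 - v p.1 + v p.2|) (Finset.mem_univ (a, b))
    have habs : u a - u b - v a + v b ≤ |u a - u b - v a + v b| := le_abs_self _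
    simp only at *
    linarith

theorem stmt14 {n : ℕ} [NeZero n] (u v : Fin n → ℝ)
    (hd : 0 < dtr u v) (ε : ℝ) (hε : 0 < ε)
    (hεs : ∀ i j : Fin n, u i - v i ≠ u j - v j →
      ε < |(u i - v i) - (u j - v j)|)
    (peak : Finset (Fin n)) (valley : Finset (Fin n))
    (hpeak : peak = Finset.univ.filter fun i => ∀ j, u j - v j ≤ u i - v i)
    (hvalley : valley = Finset.univ.filter fun i => ∀ j, u i - v i ≤ u j - v j)
    (i : Fin n) :
    (i ∉ peak ∧ i ∉ valley →
        dtr (Function.update u i (u i + ε)) v = dtr u v) ∧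
    (i ∈ peak → dtr (Function.update u i (u i + ε)) v = dtr u v + ε) ∧
    (i ∈ valley ∧ valley.card = 1 →
        dtr (Function.update u i (u i + ε)) v = dtr u v - ε) ∧
    (i ∈ valley ∧ 2 ≤ valley.card →
        dtr (Function.update u i (u i + ε)) v = dtr u v) := by
  set w : Fin n → ℝ := fun j => u j - v j with hwdef
  set w' : Fin n → ℝ := Function.update w i (w i + ε) with hw'def
  have hupd : (fun j => Function.update u i (u i + ε) j - v j) = w' := by
    funext j
    by_cases h : j = i
    · subst h
      simp only [Function.update_self, hw'def, hwdef]
      ring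
    · simp [Function.update_of_ne h, hw'def, hwdef]
  have hw'i : w' i = w i + ε := by simp [hw'def]
  have hw'ne : ∀ j, j ≠ i → w' j = w j := fun j h => Function.update_of_ne h _ _
  have hdtr' : dtr (Function.update u i (u i + ε)) v
      = Finset.univ.sup' Finset.univ_nonempty w'
        - Finset.univ.inf' Finset.univ_nonempty w' := by
    rw [dtr_eq, hupd]
  have hdtr : dtr u v = Finset.univ.sup' Finset.univ_nonempty w
      - Finset.univ.inf' Finset.univ_nonempty w := dtr_eq u v
  set M := Finset.univ.sup' Finset.univ_nonempty w with hM
  set m := Finset.univ.inf' Finset.univ_nonempty w with hm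
  obtain ⟨a, -, ha⟩ := Finset.exists_mem_eq_sup' Finset.univ_nonempty w
  obtain ⟨b, -, hb⟩ := Finset.exists_mem_eq_inf' Finset.univ_nonempty w
  have hle : ∀ j, w j ≤ M := fun j => Finset.le_sup' w (Finset.mem_univ j)
  have hge : ∀ j, m ≤ w j := fun j => Finset.inf'_le w (Finset.mem_univ j)
  have hmM : m < M := by rw [hdtr] at hd; linarith
  have hε' : ∀ j k : Fin n, w j ≠ w k → ε < |w j - w k| := hεs
  have hpk : ∀ j, j ∈ peak ↔ w j = M := by
    intro j
    rw [hpeak, Finset.mem_filter]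
    constructor
    · rintro ⟨-, h⟩
      have h2 : w a ≤ w j := h a
      exact le_antisymm (hle j) (le_of_le_of_eq (le_of_eq ha) (le_antisymm h2 (by linarith [hle j, hle a]) ▸ rfl) |>.trans h2)
    · intro h
      exact ⟨Finset.mem_univ j, fun k => (hle k).trans (le_of_eq h.symm)⟩
  have hvl : ∀ j, j ∈ valley ↔ w j = m := by
    intro j
    rw [hvalley, Finset.mem_filter]
    constructor
    · rintro ⟨-, h⟩
      have h2 : w j ≤ w b := h b
      exact le_antisymm (h2.trans (le_of_eq hb.symm)) (hge j)
    · intro h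
      exact ⟨Finset.mem_univ j, fun k => (le_of_eq h).trans (hge k)⟩
  have hgap : ∀ j k : Fin n, w j < w k → w j + ε < w k := by
    intro j k h
    have := hε' j k (ne_of_lt h)
    rw [abs_of_nonpos (by linarith)] at this
    linarith
  refine ⟨?_, ?_, ?_, ?_⟩
  · rintro ⟨h1, h2⟩
    have hiM : w i < M := lt_of_le_of_ne (hle i) (fun h => h1 ((hpk i).mpr h))
    have him : m < w i := lt_of_le_of_ne (hge i) (fun h => h2 ((hvl i).mpr h.symm))
    have hai : a ≠ i := by rintro rfl; rw [← ha] at hiM; exact lt_irrefl _ hiM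
    have hbi : b ≠ i := by rintro rfl; rw [← hb] at him; exact lt_irrefl _ him
    have hsup : Finset.univ.sup' Finset.univ_nonempty w' = M := by
      refine sup'_eq_of w' M (fun j => ?_) a ?_
      · by_cases h : j = i
        · rw [h, hw'i]
          have hia : w i < w a := by rw [← ha]; exact hiM
          linarith [hgap i a hia, ha.le, ha.ge]
        · rw [hw'ne j h]; exact hle j
      · rw [hw'ne a hai]; exact ha.symm
    have hinf : Finset.univ.inf' Finset.univ_nonempty w' = m := by
      refine inf'_eq_of w' m (fun j => ?_) b ?_
      · by_cases h : j = i
        · rw [h, hw'i]; linarith [hge i]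
        · rw [hw'ne j h]; exact hge j
      · rw [hw'ne b hbi]; exact hb.symm
    rw [hdtr', hsup, hinf, hdtr]
  · intro h1
    have hiM : w i = M := (hpk i).mp h1
    have hbi : b ≠ i := by rintro rfl; rw [hiM] at hb; exact absurd hb (ne_of_lt hmM)
    have hsup : Finset.univ.sup' Finset.univ_nonempty w' = M + ε := by
      refine sup'_eq_of w' (M + ε) (fun j => ?_) i ?_
      · by_cases h : j = i
        · rw [h, hw'i, hiM]
        · rw [hw'ne j h]; linarith [hle j]
      · rw [hw'i, hiM]
    have hinf : Finset.univ.inf' Finset.univ_nonempty w' = m := by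
      refine inf'_eq_of w' m (fun j => ?_) b ?_
      · by_cases h : j = i
        · rw [h, hw'i]; linarith [hge i]
        · rw [hw'ne j h]; exact hge j
      · rw [hw'ne b hbi]; exact hb.symm
    rw [hdtr', hsup, hinf, hdtr]; ring
  · rintro ⟨h1, h2⟩
    have him : w i = m := (hvl i).mp h1
    have hai : a ≠ i := by rintro rfl; rw [him] at ha; exact absurd ha (ne_of_gt hmM)
    have hval_eq : valley = {i} := by
      apply Finset.eq_singleton_iff_unique_mem.mpr
      refine ⟨h1, fun x hx => ?_⟩
      by_contra hxi
      have := Finset.one_lt_card.mpr ⟨x, hx, i, h1, hxi⟩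
      omega
    have hstrict : ∀ j, j ≠ i → m < w j := by
      intro j hj
      rcases lt_or_eq_of_le (hge j) with h | h
      · exact h
      · exfalso
        have hjv : j ∈ valley := (hvl j).mpr h.symm
        rw [hval_eq, Finset.mem_singleton] at hjv
        exact hj hjv
    have hsup : Finset.univ.sup' Finset.univ_nonempty w' = M := by
      refine sup'_eq_of w' M (fun j => ?_) a ?_
      · by_cases h : j = i
        · rw [h, hw'i]
          have hia : w i < w a := by rw [him, ← ha]; exact hmM
          linarith [hgap i a hia, ha.le, ha.ge]
        · rw [hw'ne j h]; exact hle j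
      · rw [hw'ne a hai]; exact ha.symm
    have hinf : Finset.univ.inf' Finset.univ_nonempty w' = m + ε := by
      refine inf'_eq_of w' (m + ε) (fun j => ?_) i ?_
      · by_cases h : j = i
        · rw [h, hw'i, him]
        · rw [hw'ne j h]
          have hij : w i < w j := by rw [him]; exact hstrict j h
          linarith [hgap i j hij, him.le, him.ge]
      · rw [hw'i, him]
    rw [hdtr', hsup, hinf, hdtr]; ring
  · rintro ⟨h1, h2⟩
    have him : w i = m := (hvl i).mp h1
    have hai : a ≠ i := by rintro rfl; rw [him] at ha; exact absurd ha (ne_of_gt hmM)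
    obtain ⟨x, hx, y, hy, hxy⟩ := Finset.one_lt_card.mp (by omega : 1 < valley.card)
    obtain ⟨c, hc, hci⟩ : ∃ c, c ∈ valley ∧ c ≠ i := by
      by_cases hxi : x = i
      · exact ⟨y, hy, fun h => hxy (hxi.trans h.symm)⟩
      · exact ⟨x, hx, hxi⟩
    have hcm : w c = m := (hvl c).mp hc
    have hsup : Finset.univ.sup' Finset.univ_nonempty w' = M := by
      refine sup'_eq_of w' M (fun j => ?_) a ?_
      · by_cases h : j = i
        · rw [h, hw'i]
          have hia : w i < w a := by rw [him, ← ha]; exact hmM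
          linarith [hgap i a hia, ha.le, ha.ge]
        · rw [hw'ne j h]; exact hle j
      · rw [hw'ne a hai]; exact ha.symm
    have hinf : Finset.univ.inf' Finset.univ_nonempty w' = m := by
      refine inf'_eq_of w' m (fun j => ?_) c ?_
      · by_cases h : j = i
        · rw [h, hw'i]; linarith [hge i]
        · rw [hw'ne j h]; exact hge j
      · rw [hw'ne c hci]; exact hcm
    rw [hdtr', hsup, hinf, hdtr]
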